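/- Let N ≥ 1 be an integer, Δx = 1/N, Δt > 0, and let u be a periodic grid function. Define the periodic grid function w by w_j = ū_j − Δt ū_j (D₀u)_j, where ū_j = (u_{j+1} + u_{j−1})/2. If the CFL condition (Δt/Δx)·M·(1 + 24(Δt/Δx)·M) ≤ 3/2 holds, where M = max_{1 ≤ j ≤ N} |u_j|, then ‖w‖_h² + (Δx²/8) ‖D₀u‖_h² ≤ ‖u‖_h². -/

import Mathlib

/-- Forward difference operator `(D₊u)_i = (u_{i+1} − u_i)/h`. -/
noncomputable def Dp (h : ℝ) (u : ℤ → ℝ) : ℤ → ℝ := fun i => (u (i + 1) - u i) / h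

/-- Backward difference operator `(D₋u)_i = (u_i − u_{i−1})/h`. -/
noncomputable def Dm (h : ℝ) (u : ℤ → ℝ) : ℤ → ℝ := fun i => (u i - u (i - 1)) / h

/-- Central difference operator `(D₀u)_i = (u_{i+1} − u_{i−1})/(2h)`. -/
noncomputable def D0 (h : ℝ) (u : ℤ → ℝ) : ℤ → ℝ := fun i => (u (i + 1) - u (i - 1)) / (2 * h)

/-- Discrete inner product `(f,g)_h = h Σ_{i=1}^N f_i g_i`. -/
noncomputable def iph (N : ℕ) (h : ℝ) (f g : ℤ → ℝ) : ℝ :=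
  h * ∑ i ∈ Finset.Icc (1 : ℤ) (N : ℤ), f i * g i

/-- Discrete squared norm `‖f‖_h² = h Σ_{i=1}^N f_i²`. -/
noncomputable def nh2 (N : ℕ) (h : ℝ) (f : ℤ → ℝ) : ℝ :=
  h * ∑ i ∈ Finset.Icc (1 : ℤ) (N : ℤ), (f i) ^ 2

/-- Discrete norm `‖f‖_h`. -/
noncomputable def normh (N : ℕ) (h : ℝ) (f : ℤ → ℝ) : ℝ := Real.sqrt (nh2 N h f)

/-- A periodic grid function with period `N`: `u_{i+N} = u_i` for all `i`. -/
def PeriodicGrid (N : ℕ) (u : ℤ → ℝ) : Prop := ∀ i : ℤ, u (i + N) = u i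

lemma sum_shift_up (N : ℕ) (hN : 1 ≤ N) (v : ℤ → ℝ) (hv : ∀ i : ℤ, v (i + N) = v i) :
    ∑ i ∈ Finset.Icc (1 : ℤ) (N : ℤ), v (i + 1) = ∑ i ∈ Finset.Icc (1 : ℤ) (N : ℤ), v i := by
  have hN' : (1:ℤ) ≤ (N:ℤ) := by exact_mod_cast hN
  have h1 : ∑ i ∈ Finset.Icc (1 : ℤ) (N : ℤ), v (i + 1)
      = ∑ i ∈ Finset.Icc (2 : ℤ) ((N : ℤ) + 1), v i := by
    rw [show Finset.Icc (2:ℤ) ((N:ℤ)+1) = Finset.map (addRightEmbedding 1) (Finset.Icc (1:ℤ) (N:ℤ)) by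
      rw [Finset.map_add_right_Icc]; norm_num]
    rw [Finset.sum_map]
    rfl
  have e1 : Finset.Icc (2:ℤ) ((N:ℤ)+1) = insert ((N:ℤ)+1) (Finset.Icc 2 (N:ℤ)) := by
    ext x; simp only [Finset.mem_Icc, Finset.mem_insert]; omega
  have e2 : Finset.Icc (1:ℤ) (N:ℤ) = insert (1:ℤ) (Finset.Icc 2 (N:ℤ)) := by
    ext x; simp only [Finset.mem_Icc, Finset.mem_insert]; omega
  have m1 : ((N:ℤ)+1) ∉ Finset.Icc (2:ℤ) (N:ℤ) := by simp
  have m2 : (1:ℤ) ∉ Finset.Icc (2:ℤ) (N:ℤ) := by simp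
  rw [h1, e1, Finset.sum_insert m1]
  conv_rhs => rw [e2, Finset.sum_insert m2]
  have : v ((N:ℤ)+1) = v 1 := by rw [show (N:ℤ)+1 = 1 + (N:ℤ) by ring, hv]
  rw [this]

lemma sum_shift_down (N : ℕ) (hN : 1 ≤ N) (v : ℤ → ℝ) (hv : ∀ i : ℤ, v (i + N) = v i) :
    ∑ i ∈ Finset.Icc (1 : ℤ) (N : ℤ), v (i - 1) = ∑ i ∈ Finset.Icc (1 : ℤ) (N : ℤ), v i := by
  have := sum_shift_up N hN (fun i => v (i - 1)) (by
    intro i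
    show v (i + (N:ℤ) - 1) = v (i - 1)
    rw [show i + (N:ℤ) - 1 = (i - 1) + (N:ℤ) by ring, hv])
  simp only [add_sub_cancel_right] at this
  exact this.symm


lemma burgers_perterm (lam M s d : ℝ) (hl : 0 < lam) (hM0 : 0 ≤ M)
    (hx : lam * M ≤ 1/4) (hs : s ^ 2 ≤ M ^ 2) (hd : d ≤ M) :
    lam ^ 2 * (s ^ 2 * d ^ 2) + (2 * lam / 3) * d ^ 3 ≤ (7/8) * d ^ 2 := by
  have hd2 : (0:ℝ) ≤ d ^ 2 := sq_nonneg _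
  have hd3 : d ^ 3 ≤ M * d ^ 2 := by nlinarith
  have hEj : s ^ 2 * d ^ 2 ≤ M ^ 2 * d ^ 2 := mul_le_mul_of_nonneg_right hs hd2
  have t1 : lam ^ 2 * (s ^ 2 * d ^ 2) ≤ lam ^ 2 * (M ^ 2 * d ^ 2) :=
    mul_le_mul_of_nonneg_left hEj (sq_nonneg lam)
  have t2 : (2 * lam / 3) * d ^ 3 ≤ (2 * lam / 3) * (M * d ^ 2) :=
    mul_le_mul_of_nonneg_left hd3 (by positivity)
  have t3 : lam ^ 2 * M ^ 2 ≤ 1/16 := by nlinarith [mul_nonneg hl.le hM0]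
  nlinarith [mul_le_mul_of_nonneg_right t3 hd2, mul_le_mul_of_nonneg_right hx hd2, hl.le]

set_option maxHeartbeats 2000000 in
/-- Stability of the explicit Burgers step of the fully-discrete scheme (paper's estimate
(3.12) in the proof of Lemma 3.2): if `w_j = ū_j − Δt ū_j (D₀u)_j` with
`ū_j = (u_{j+1}+u_{j−1})/2`, and the CFL condition
`(Δt/Δx) M (1 + 24 (Δt/Δx) M) ≤ 3/2` holds with `M = max_{1≤j≤N} |u_j|`, then
`‖w‖_h² + (Δx²/8) ‖D₀u‖_h² ≤ ‖u‖_h²`. -/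
theorem burgers_step_stability (N : ℕ) (hN : 1 ≤ N) (Δx Δt : ℝ)
    (hΔx : Δx = 1 / N) (hΔt : 0 < Δt)
    (u w : ℤ → ℝ) (hu : PeriodicGrid N u)
    (hw : ∀ j : ℤ, w j = (u (j + 1) + u (j - 1)) / 2
        - Δt * ((u (j + 1) + u (j - 1)) / 2) * D0 Δx u j)
    (M : ℝ)
    (hM : M = (Finset.Icc (1 : ℤ) (N : ℤ)).sup'
        (Finset.nonempty_Icc.mpr (by exact_mod_cast hN)) (fun j => |u j|))
    (hcfl : (Δt / Δx) * M * (1 + 24 * (Δt / Δx) * M) ≤ 3 / 2) :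
    nh2 N Δx w + (Δx ^ 2 / 8) * nh2 N Δx (D0 Δx u) ≤ nh2 N Δx u := by
  have hN' : (1:ℤ) ≤ (N:ℤ) := by exact_mod_cast hN
  have hNR : (0:ℝ) < (N:ℝ) := by exact_mod_cast Nat.lt_of_lt_of_le Nat.zero_lt_one hN
  have hΔxpos : 0 < Δx := by rw [hΔx]; positivity
  have hΔxne : Δx ≠ 0 := ne_of_gt hΔxpos
  -- everywhere bound by M
  have hbound : ∀ i : ℤ, |u i| ≤ M := by
    intro i
    have hp : Function.Periodic u (N:ℤ) := hu
    have key : u i = u ((i - 1) % (N:ℤ) + 1) := by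
      have h2 : u ((i - 1) % (N:ℤ) + 1 + ((i-1)/(N:ℤ)) • (N:ℤ)) = u ((i - 1) % (N:ℤ) + 1) :=
        (hp.zsmul ((i-1)/(N:ℤ))) _
      have h3 : (i - 1) % (N:ℤ) + 1 + ((i-1)/(N:ℤ)) • (N:ℤ) = i := by
        have h := Int.mul_ediv_add_emod (i-1) (N:ℤ)
        simp only [smul_eq_mul]
        linear_combination h
      conv_lhs => rw [← h3]
      exact h2
    have hmem : (i - 1) % (N:ℤ) + 1 ∈ Finset.Icc (1:ℤ) (N:ℤ) := by
      have h0 : 0 ≤ (i - 1) % (N:ℤ) := Int.emod_nonneg _ (by omega)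
      have h1 : (i - 1) % (N:ℤ) < (N:ℤ) := Int.emod_lt_of_pos _ (by omega)
      simp only [Finset.mem_Icc]; omega
    rw [key, hM]
    exact Finset.le_sup' (fun j => |u j|) hmem
  have hM0 : 0 ≤ M := le_trans (abs_nonneg (u 1)) (hbound 1)
  obtain ⟨lam, hlam⟩ : ∃ lam : ℝ, lam = Δt / Δx := ⟨_, rfl⟩
  rw [← hlam] at hcfl
  have hlpos : 0 < lam := hlam ▸ div_pos hΔt hΔxpos
  have hx : lam * M ≤ 1/4 := by
    nlinarith [mul_nonneg hlpos.le hM0, sq_nonneg (lam * M - 1/4)]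
  obtain ⟨sb, hsb⟩ : ∃ sb : ℤ → ℝ, ∀ j, sb j = (u (j+1) + u (j-1))/2 := ⟨_, fun _ => rfl⟩
  obtain ⟨db, hdb⟩ : ∃ db : ℤ → ℝ, ∀ j, db j = (u (j+1) - u (j-1))/2 := ⟨_, fun _ => rfl⟩
  set S := Finset.Icc (1:ℤ) (N:ℤ) with hSdef
  obtain ⟨A, hA⟩ : ∃ A : ℝ, A = ∑ j ∈ S, sb j ^ 2 := ⟨_, rfl⟩
  obtain ⟨B, hB⟩ : ∃ B : ℝ, B = ∑ j ∈ S, db j ^ 2 := ⟨_, rfl⟩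
  obtain ⟨C, hC⟩ : ∃ C : ℝ, C = ∑ j ∈ S, sb j ^ 2 * db j := ⟨_, rfl⟩
  obtain ⟨D, hD⟩ : ∃ D : ℝ, D = ∑ j ∈ S, db j ^ 3 := ⟨_, rfl⟩
  obtain ⟨E, hE⟩ : ∃ E : ℝ, E = ∑ j ∈ S, sb j ^ 2 * db j ^ 2 := ⟨_, rfl⟩
  -- shift sums
  have hup2 : ∑ j ∈ S, u (j+1) ^ 2 = ∑ j ∈ S, u j ^ 2 :=
    sum_shift_up N hN (fun i => u i ^ 2) (fun i => by simp [hu i])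
  have hdn2 : ∑ j ∈ S, u (j-1) ^ 2 = ∑ j ∈ S, u j ^ 2 :=
    sum_shift_down N hN (fun i => u i ^ 2) (fun i => by simp [hu i])
  have hup3 : ∑ j ∈ S, u (j+1) ^ 3 = ∑ j ∈ S, u j ^ 3 :=
    sum_shift_up N hN (fun i => u i ^ 3) (fun i => by simp [hu i])
  have hdn3 : ∑ j ∈ S, u (j-1) ^ 3 = ∑ j ∈ S, u j ^ 3 :=
    sum_shift_down N hN (fun i => u i ^ 3) (fun i => by simp [hu i])
  -- identity: A + B = ∑ u²
  have hsq : A + B = ∑ j ∈ S, u j ^ 2 := by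
    have h1 : A + B = ∑ j ∈ S, (u (j+1)^2/2 + u (j-1)^2/2) := by
      rw [hA, hB, ← Finset.sum_add_distrib]
      exact Finset.sum_congr rfl (fun j _ => by rw [hsb j, hdb j]; ring)
    rw [h1, Finset.sum_add_distrib, ← Finset.sum_div, ← Finset.sum_div, hup2, hdn2]
    ring
  -- identity: 3C + D = 0
  have hcube : 3 * C + D = 0 := by
    have h1 : 3 * C + D = ∑ j ∈ S, (u (j+1)^3/2 - u (j-1)^3/2) := by
      rw [hC, hD, Finset.mul_sum, ← Finset.sum_add_distrib]
      exact Finset.sum_congr rfl (fun j _ => by rw [hsb j, hdb j]; ring)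
    rw [h1, Finset.sum_sub_distrib, ← Finset.sum_div, ← Finset.sum_div, hup3, hdn3]
    ring
  -- sum of w²
  have hwsum : ∑ j ∈ S, w j ^ 2 = A - 2 * lam * C + lam ^ 2 * E := by
    have h1 : ∑ j ∈ S, w j ^ 2
        = ∑ j ∈ S, (sb j ^ 2 - 2 * lam * (sb j ^ 2 * db j) + lam ^ 2 * (sb j ^ 2 * db j ^ 2)) := by
      refine Finset.sum_congr rfl (fun j _ => ?_)
      rw [hw j, hsb j, hdb j, hlam]
      simp only [D0, div_eq_mul_inv, mul_inv]
      ring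
    rw [h1, Finset.sum_add_distrib, Finset.sum_sub_distrib, ← Finset.mul_sum, ← Finset.mul_sum,
      ← hA, ← hC, ← hE]
  -- sum of D0²
  have hD0sum : ∑ j ∈ S, (D0 Δx u j) ^ 2 = B / Δx ^ 2 := by
    have h1 : ∑ j ∈ S, (D0 Δx u j) ^ 2 = ∑ j ∈ S, db j ^ 2 / Δx ^ 2 := by
      refine Finset.sum_congr rfl (fun j _ => ?_)
      rw [hdb j]
      simp only [D0, div_eq_mul_inv, mul_inv]
      ring
    rw [h1, ← Finset.sum_div, ← hB]
  -- key per-term estimate summed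
  have hkey : lam ^ 2 * E + (2 * lam / 3) * D ≤ (7/8) * B := by
    have hterm : ∀ j ∈ S, lam ^ 2 * (sb j ^ 2 * db j ^ 2) + (2 * lam / 3) * db j ^ 3
        ≤ (7/8) * db j ^ 2 := by
      intro j _
      have ha := abs_le.mp (hbound (j+1))
      have hb := abs_le.mp (hbound (j-1))
      have hsM : sb j ^ 2 ≤ M ^ 2 := by
        rw [hsb j]; nlinarith [ha.1, ha.2, hb.1, hb.2]
      have hdM : db j ≤ M := by
        rw [hdb j]; nlinarith [ha.1, ha.2, hb.1, hb.2]
      exact burgers_perterm lam M (sb j) (db j) hlpos hM0 hx hsM hdM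
    have hsum := Finset.sum_le_sum hterm
    calc lam ^ 2 * E + (2 * lam / 3) * D
        = ∑ j ∈ S, (lam ^ 2 * (sb j ^ 2 * db j ^ 2) + (2 * lam / 3) * db j ^ 3) := by
          rw [Finset.sum_add_distrib, ← Finset.mul_sum, ← Finset.mul_sum, ← hE, ← hD]
      _ ≤ ∑ j ∈ S, (7/8) * db j ^ 2 := hsum
      _ = (7/8) * B := by rw [← Finset.mul_sum, ← hB]
  -- conclude
  have L1 : nh2 N Δx w = Δx * (A - 2 * lam * C + lam ^ 2 * E) := by
    rw [nh2, ← hSdef, hwsum]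
  have L2 : nh2 N Δx (D0 Δx u) = Δx * (B / Δx ^ 2) := by
    rw [nh2, ← hSdef, hD0sum]
  have L3 : nh2 N Δx u = Δx * (A + B) := by
    rw [nh2, ← hSdef, ← hsq]
  rw [L1, L2, L3]
  have hfin : Δx ^ 2 / 8 * (Δx * (B / Δx ^ 2)) = Δx * (B / 8) := by
    field_simp
  have hCD : -2 * lam * C = (2 * lam / 3) * D := by
    have : C = -D / 3 := by linarith
    rw [this]; ring
  have goal' : (A - 2 * lam * C + lam ^ 2 * E) + B / 8 ≤ A + B := by nlinarith [hkey, hCD]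
  have h := mul_le_mul_of_nonneg_left goal' hΔxpos.le
  have expand : Δx * (A - 2 * lam * C + lam ^ 2 * E) + Δx ^ 2 / 8 * (Δx * (B / Δx ^ 2))
      = Δx * ((A - 2 * lam * C + lam ^ 2 * E) + B / 8) := by
    rw [hfin]; ring
  rw [expand]
  exact h
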